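/- Let φ : ℚ⟨Z⟩ → A be an algebra homomorphism from the block shuffle algebra (ℚ⟨Z⟩, ⊞) to a commutative ℚ-algebra A that kills all products: φ(u ⊞ v) = 0 for all nonempty u,v. Then for any z ∈ ℚZ and k ≥ 0, φ(z^{2k+1}) = (1/(2k+1)) φ(z^{◊(2k+1)}) and φ(z^{2k}) = 0 for k ≥ 1, where z^n denotes the concatenation power and z^{◊n} the ◊-power (with z_a ◊ z_b = z_{a+b}). -/

import Mathlib

/- STATEMENT 16: let φ be an algebra homomorphism from the block shuffle algebra
(ℚ⟨Z⟩, ⊞), Z = {z_m}, to a commutative ℚ-algebra A that kills all products of nonempty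
elements. Then φ(z^{2k+1}) = (1/(2k+1)) φ(z^{◊(2k+1)}) for z ∈ ℚZ and k ≥ 0, and
φ(z^{2k}) = 0 for k ≥ 1, where zⁿ is the concatenation power and z^{◊n} the ◊-power
(z_a ◊ z_b = z_{a+b}). -/

abbrev QW := List ℕ →₀ ℚ

/-- Prepend a letter to every word of a polynomial. -/
noncomputable def pre (a : ℕ) (p : QW) : QW :=
  Finsupp.mapDomain (a :: ·) p

/-- Shuffle product of two words. -/
noncomputable def sh : List ℕ → List ℕ → QW
  | [], v => Finsupp.single v 1
  | u, [] => Finsupp.single u 1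
  | a :: u, b :: v => pre a (sh u (b :: v)) + pre b (sh (a :: u) v)
  termination_by u v => u.length + v.length

/-- Bilinear extension of the shuffle product. -/
noncomputable def shP (p q : QW) : QW :=
  p.sum fun u r => q.sum fun v s => (r * s) • sh u v

/-- The map ζ_a on words: ζ_a(z_b w) = z_{a+b} w, ζ_a(1) = 0. -/
noncomputable def zetaW (a : ℕ) : List ℕ → QW
  | [] => 0
  | b :: t => Finsupp.single ((a + b) :: t) 1

/-- Linear extension of ζ_a. -/
noncomputable def zetaMap (a : ℕ) (p : QW) : QW :=
  p.sum fun w r => r • zetaW a w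

/-- The block shuffle product of two words:
`z_a u ⊞ z_b v = z_a(u ⊞ z_b v) + z_b(z_a u ⊞ v) − ζ_{a+b}(u ⊞ v)`. -/
noncomputable def bsh : List ℕ → List ℕ → QW
  | [], v => Finsupp.single v 1
  | u, [] => Finsupp.single u 1
  | a :: u, b :: v =>
      pre a (bsh u (b :: v)) + pre b (bsh (a :: u) v) - zetaMap (a + b) (bsh u v)
  termination_by u v => u.length + v.length

/-- Bilinear extension of the block shuffle product. -/
noncomputable def bshP (p q : QW) : QW :=
  p.sum fun u r => q.sum fun v s => (r * s) • bsh u v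

/-- Concatenation product on ℚ⟨Z⟩. -/
noncomputable def concP (p q : QW) : QW :=
  p.sum fun u r => q.sum fun v s => Finsupp.single (u ++ v) (r * s)

/-- Concatenation powers. -/
noncomputable def cpow (p : QW) : ℕ → QW
  | 0 => Finsupp.single [] 1
  | n + 1 => concP p (cpow p n)

/-- The embedding ℚZ → ℚ⟨Z⟩ sending each letter to the corresponding length-one word. -/
noncomputable def emb (z : ℕ →₀ ℚ) : QW :=
  z.sum fun a r => Finsupp.single [a] r

/-- The ◊ product on ℚZ, extending z_a ◊ z_b = z_{a+b} bilinearly. -/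
noncomputable def dmul (z w : ℕ →₀ ℚ) : ℕ →₀ ℚ :=
  z.sum fun a r => w.sum fun b s => Finsupp.single (a + b) (r * s)

/-- `dpowSucc z n` is the (n+1)-st ◊-power `z^{◊(n+1)}`. -/
noncomputable def dpowSucc (z : ℕ →₀ ℚ) : ℕ → (ℕ →₀ ℚ)
  | 0 => z
  | n + 1 => dmul z (dpowSucc z n)

/-! ### Auxiliary development -/

open Finsupp

section AlgebraIdent

instance listMonoidInst : Monoid (List ℕ) := inferInstanceAs (Monoid (FreeMonoid ℕ))

lemma concP_eq_mul (p q : QW) :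
    (MonoidAlgebra.ofCoeff (concP p q) : MonoidAlgebra ℚ (List ℕ)) =
      MonoidAlgebra.ofCoeff p * MonoidAlgebra.ofCoeff q := by
  apply MonoidAlgebra.coeff_injective
  rw [MonoidAlgebra.mul_def, concP]
  simp only [MonoidAlgebra.coeff_ofCoeff, MonoidAlgebra.coeff_finsuppSum,
    MonoidAlgebra.coeff_single] <;> rfl

lemma dmul_eq_mul (z w : ℕ →₀ ℚ) :
    (AddMonoidAlgebra.ofCoeff (dmul z w) : AddMonoidAlgebra ℚ ℕ) =
      AddMonoidAlgebra.ofCoeff z * AddMonoidAlgebra.ofCoeff w := by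
  apply AddMonoidAlgebra.coeff_injective
  rw [AddMonoidAlgebra.mul_def, dmul]
  simp only [AddMonoidAlgebra.coeff_ofCoeff, AddMonoidAlgebra.coeff_finsuppSum,
    AddMonoidAlgebra.coeff_single] <;> rfl

lemma one_eq_single : (1 : MonoidAlgebra ℚ (List ℕ)) =
    MonoidAlgebra.ofCoeff (Finsupp.single ([] : List ℕ) 1) := rfl

lemma cpow_eq_pow (p : QW) (n : ℕ) :
    (MonoidAlgebra.ofCoeff (cpow p n) : MonoidAlgebra ℚ (List ℕ)) = MonoidAlgebra.ofCoeff p ^ n := by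
  induction n with
  | zero => rw [cpow, pow_zero, one_eq_single]
  | succ n ih => rw [cpow, concP_eq_mul, ih, ← pow_succ']

lemma dpowSucc_eq_pow (z : ℕ →₀ ℚ) (n : ℕ) :
    (AddMonoidAlgebra.ofCoeff (dpowSucc z n) : AddMonoidAlgebra ℚ ℕ) =
      AddMonoidAlgebra.ofCoeff z ^ (n+1) := by
  induction n with
  | zero => rw [dpowSucc, pow_one]
  | succ n ih => rw [dpowSucc, dmul_eq_mul, ih, ← pow_succ']

lemma dmul_dmul (z : ℕ →₀ ℚ) (j : ℕ) :
    dmul (dmul (dpowSucc z j) z) z = dpowSucc z (j + 2) := by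
  apply AddMonoidAlgebra.ofCoeff_injective
  simp only [dmul_eq_mul, dpowSucc_eq_pow]
  ring

end AlgebraIdent

section Bil

noncomputable def bil (f : List ℕ → List ℕ → QW) : QW →ₗ[ℚ] QW →ₗ[ℚ] QW :=
  Finsupp.lsum ℚ fun u => LinearMap.toSpanSingleton ℚ (QW →ₗ[ℚ] QW)
    (Finsupp.lsum ℚ fun v => LinearMap.toSpanSingleton ℚ QW (f u v))

lemma bil_apply (f : List ℕ → List ℕ → QW) (p q : QW) :
    bil f p q = p.sum fun u r => q.sum fun v s => (r * s) • f u v := by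
  rw [bil, Finsupp.lsum_apply, LinearMap.finsupp_sum_apply]
  refine Finsupp.sum_congr fun u _ => ?_
  rw [LinearMap.toSpanSingleton_apply, LinearMap.smul_apply, Finsupp.lsum_apply,
    Finsupp.smul_sum]
  refine Finsupp.sum_congr fun v _ => ?_
  rw [LinearMap.toSpanSingleton_apply, smul_smul]

lemma bshP_eq (p q : QW) : bshP p q = bil bsh p q := (bil_apply bsh p q).symm

lemma concP_eq_bil (p q : QW) :
    concP p q = bil (fun u v => Finsupp.single (u ++ v) 1) p q := by
  rw [bil_apply, concP]
  refine Finsupp.sum_congr fun u _ => Finsupp.sum_congr fun v _ => ?_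
  rw [Finsupp.smul_single, smul_eq_mul, mul_one]

lemma bil_single_single (f : List ℕ → List ℕ → QW) (u v : List ℕ) :
    bil f (Finsupp.single u 1) (Finsupp.single v 1) = f u v := by
  rw [bil_apply]
  rw [Finsupp.sum_single_index (by simp), Finsupp.sum_single_index (by simp)]
  simp

end Bil


section WordLemmas

lemma bsh_nil_left (v : List ℕ) : bsh [] v = Finsupp.single v 1 := by
  cases v <;> rw [bsh] <;> simp

lemma bsh_nil_right (u : List ℕ) : bsh u [] = Finsupp.single u 1 := by
  cases u <;> rw [bsh] <;> simp

lemma bsh_cons_cons (a b : ℕ) (u v : List ℕ) :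
    bsh (a :: u) (b :: v) =
      pre a (bsh u (b :: v)) + pre b (bsh (a :: u) v) - zetaMap (a + b) (bsh u v) := by
  rw [bsh]

lemma zetaMap_single_one (a : ℕ) (w : List ℕ) :
    zetaMap a (Finsupp.single w 1) = zetaW a w := by
  rw [zetaMap, Finsupp.sum_single_index (by simp)]
  rw [one_smul]

lemma pre_eq_concP (b : ℕ) (p : QW) :
    pre b p = concP (Finsupp.single [b] 1) p := by
  rw [concP, Finsupp.sum_single_index (by simp), pre, Finsupp.mapDomain]
  refine Finsupp.sum_congr fun v _ => ?_
  simp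

lemma concP_single_single (u v : List ℕ) :
    concP (Finsupp.single u (1:ℚ)) (Finsupp.single v 1) = Finsupp.single (u ++ v) 1 := by
  rw [concP, Finsupp.sum_single_index (by simp), Finsupp.sum_single_index (by simp)]
  rw [one_mul]

lemma bsh_single_cons (a b : ℕ) (w : List ℕ) :
    bsh [a] (b :: w) =
      Finsupp.single (a :: b :: w) 1 + pre b (bsh [a] w) - zetaW (a + b) w := by
  rw [bsh_cons_cons, bsh_nil_left, bsh_nil_left, zetaMap_single_one]
  rw [pre, Finsupp.mapDomain_single]

end WordLemmas

section Linearity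

lemma emb_zero : emb 0 = 0 := by simp [emb]

lemma emb_add (y y' : ℕ →₀ ℚ) : emb (y + y') = emb y + emb y' := by
  rw [emb, emb, emb, Finsupp.sum_add_index' (by simp) (by simp [Finsupp.single_add])]

lemma emb_smul (r : ℚ) (y : ℕ →₀ ℚ) : emb (r • y) = r • emb y := by
  rw [emb, emb, Finsupp.sum_smul_index (by simp), Finsupp.smul_sum]
  refine Finsupp.sum_congr fun a _ => ?_
  rw [Finsupp.smul_single, smul_eq_mul]

lemma emb_single (a : ℕ) (r : ℚ) : emb (Finsupp.single a r) = Finsupp.single [a] r :=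
  Finsupp.sum_single_index (by simp)

lemma emb_apply_nil (y : ℕ →₀ ℚ) : emb y [] = 0 := by
  rw [emb, Finsupp.sum_apply]
  refine Finset.sum_eq_zero fun a _ => ?_
  simp

lemma bil_zero_left (f : List ℕ → List ℕ → QW) (q : QW) : bil f 0 q = 0 := by
  rw [map_zero]; rfl

lemma bil_zero_right (f : List ℕ → List ℕ → QW) (p : QW) : bil f p 0 = 0 :=
  map_zero _

lemma bil_add_left (f : List ℕ → List ℕ → QW) (p p' q : QW) :
    bil f (p + p') q = bil f p q + bil f p' q := by
  rw [map_add]; rfl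

lemma bil_add_right (f : List ℕ → List ℕ → QW) (p q q' : QW) :
    bil f p (q + q') = bil f p q + bil f p q' :=
  map_add _ _ _

lemma bil_smul_left (f : List ℕ → List ℕ → QW) (r : ℚ) (p q : QW) :
    bil f (r • p) q = r • bil f p q := by
  rw [map_smul]; rfl

lemma bil_smul_right (f : List ℕ → List ℕ → QW) (r : ℚ) (p q : QW) :
    bil f p (r • q) = r • bil f p q :=
  map_smul _ _ _

lemma concP_zero_left (q : QW) : concP 0 q = 0 := by
  rw [concP_eq_bil, bil_zero_left]

lemma concP_zero_right (p : QW) : concP p 0 = 0 := by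
  rw [concP_eq_bil, bil_zero_right]

lemma concP_add_left (p p' q : QW) : concP (p + p') q = concP p q + concP p' q := by
  rw [concP_eq_bil, concP_eq_bil, concP_eq_bil, bil_add_left]

lemma concP_add_right (p q q' : QW) : concP p (q + q') = concP p q + concP p q' := by
  rw [concP_eq_bil, concP_eq_bil, concP_eq_bil, bil_add_right]

lemma concP_smul_left (r : ℚ) (p q : QW) : concP (r • p) q = r • concP p q := by
  rw [concP_eq_bil, concP_eq_bil, bil_smul_left]

lemma concP_smul_right (r : ℚ) (p q : QW) : concP p (r • q) = r • concP p q := by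
  rw [concP_eq_bil, concP_eq_bil, bil_smul_right]

end Linearity

section Zeta

noncomputable def zL (a : ℕ) : QW →ₗ[ℚ] QW :=
  Finsupp.lsum ℚ fun w => LinearMap.toSpanSingleton ℚ QW (zetaW a w)

lemma zetaMap_eq (a : ℕ) (p : QW) : zetaMap a p = zL a p := by
  rw [zetaMap, zL, Finsupp.lsum_apply]
  exact Finsupp.sum_congr fun w _ => (LinearMap.toSpanSingleton_apply _ _ _ _).symm

noncomputable def ztB : (ℕ →₀ ℚ) →ₗ[ℚ] QW →ₗ[ℚ] QW :=
  Finsupp.lsum ℚ fun a => LinearMap.toSpanSingleton ℚ (QW →ₗ[ℚ] QW) (zL a)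

lemma ztB_single (a : ℕ) (q : QW) : ztB (Finsupp.single a 1) q = zetaMap a q := by
  rw [ztB, Finsupp.lsum_single, LinearMap.toSpanSingleton_apply, one_smul, zetaMap_eq]

end Zeta

section Step

lemma dmul_zero_left (x : ℕ →₀ ℚ) : dmul 0 x = 0 := by
  apply AddMonoidAlgebra.ofCoeff_injective
  rw [dmul_eq_mul, AddMonoidAlgebra.ofCoeff_zero, zero_mul]

lemma dmul_zero_right (y : ℕ →₀ ℚ) : dmul y 0 = 0 := by
  apply AddMonoidAlgebra.ofCoeff_injective
  rw [dmul_eq_mul, AddMonoidAlgebra.ofCoeff_zero, mul_zero]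

lemma dmul_add_left (y y' x : ℕ →₀ ℚ) : dmul (y + y') x = dmul y x + dmul y' x := by
  apply AddMonoidAlgebra.ofCoeff_injective
  simp only [dmul_eq_mul, AddMonoidAlgebra.ofCoeff_add]; exact add_mul _ _ _

lemma dmul_add_right (y x x' : ℕ →₀ ℚ) : dmul y (x + x') = dmul y x + dmul y x' := by
  apply AddMonoidAlgebra.ofCoeff_injective
  simp only [dmul_eq_mul, AddMonoidAlgebra.ofCoeff_add]; exact mul_add _ _ _

lemma dmul_smul_left (r : ℚ) (y x : ℕ →₀ ℚ) : dmul (r • y) x = r • dmul y x := by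
  apply AddMonoidAlgebra.ofCoeff_injective
  simp only [dmul_eq_mul, AddMonoidAlgebra.ofCoeff_smul]; exact smul_mul_assoc _ _ _

lemma dmul_smul_right (r : ℚ) (y x : ℕ →₀ ℚ) : dmul y (r • x) = r • dmul y x := by
  apply AddMonoidAlgebra.ofCoeff_injective
  simp only [dmul_eq_mul, AddMonoidAlgebra.ofCoeff_smul]; exact mul_smul_comm _ _ _

lemma dmul_single_single (a b : ℕ) :
    dmul (Finsupp.single a (1:ℚ)) (Finsupp.single b 1) = Finsupp.single (a + b) 1 := by
  rw [dmul, Finsupp.sum_single_index (by simp), Finsupp.sum_single_index (by simp), one_mul]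

lemma single_eq_smul (a : ℕ) (r : ℚ) : Finsupp.single a r = r • Finsupp.single a 1 := by
  rw [Finsupp.smul_single, smul_eq_mul, mul_one]

lemma singleW_eq_smul (w : List ℕ) (r : ℚ) :
    (Finsupp.single w r : QW) = r • Finsupp.single w 1 := by
  rw [Finsupp.smul_single, smul_eq_mul, mul_one]

/-- The key recursion step, at the level of polynomials. -/
lemma step (y x : ℕ →₀ ℚ) (q : QW) :
    bil bsh (emb y) (concP (emb x) q) =
      concP (emb y) (concP (emb x) q) + concP (emb x) (bil bsh (emb y) q)
        - ztB (dmul y x) q := by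
  induction y using Finsupp.induction_linear with
  | zero =>
      simp [emb_zero, bil_zero_left, concP_zero_left, concP_zero_right, dmul_zero_left]
  | add y y' hy hy' =>
      simp only [emb_add, bil_add_left, concP_add_left, concP_add_right, dmul_add_left,
        map_add, LinearMap.add_apply, hy, hy']
      abel
  | single a r =>
      rw [single_eq_smul a r]
      simp only [emb_smul, bil_smul_left, concP_smul_left, concP_smul_right,
        dmul_smul_left, map_smul, LinearMap.smul_apply]
      rw [← smul_add, ← smul_sub]
      congr 1
      induction x using Finsupp.induction_linear with
      | zero =>
          simp [emb_zero, bil_zero_right, concP_zero_left, concP_zero_right,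
            dmul_zero_right]
      | add x x' hx hx' =>
          simp only [emb_add, concP_add_left, bil_add_right, concP_add_right,
            dmul_add_right, map_add, LinearMap.add_apply, hx, hx']
          abel
      | single b s =>
          rw [single_eq_smul b s]
          simp only [emb_smul, concP_smul_left, bil_smul_right, concP_smul_right,
            dmul_smul_right, map_smul, LinearMap.smul_apply]
          rw [← smul_add, ← smul_sub]
          congr 1
          induction q using Finsupp.induction_linear with
          | zero =>
              simp [concP_zero_right, bil_zero_right]
          | add q q' hq hq' =>
              simp only [concP_add_right, bil_add_right, map_add, hq, hq']
              abel
          | single w t =>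
              rw [singleW_eq_smul w t]
              simp only [concP_smul_right, bil_smul_right, map_smul]
              rw [← smul_add, ← smul_sub]
              congr 1
              -- core case: all singles with coefficient 1
              rw [emb_single, emb_single, concP_single_single, dmul_single_single,
                ztB_single, zetaMap_single_one]
              show bil bsh (Finsupp.single [a] 1) (Finsupp.single (b :: w) 1) = _
              rw [bil_single_single, bil_single_single, bsh_single_cons,
                concP_single_single, ← pre_eq_concP]
              show _ = Finsupp.single (a :: b :: w) 1 + pre b (bsh [a] w) - zetaW (a+b) w
              rfl
end Step

section Bform

lemma bil_bsh_one_right (p : QW) : bil bsh p (Finsupp.single [] 1) = p := by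
  rw [bil_apply]
  have : ∀ u : List ℕ, ∀ r : ℚ,
      ((Finsupp.single [] 1 : QW).sum fun v s => (r * s) • bsh u v) = Finsupp.single u r := by
    intro u r
    rw [Finsupp.sum_single_index (by simp), bsh_nil_right, mul_one, Finsupp.smul_single,
      smul_eq_mul, mul_one]
  rw [Finsupp.sum_congr fun u _ => this u (p u)]
  exact Finsupp.sum_single p

lemma concP_one_left (q : QW) : concP (Finsupp.single [] 1) q = q := by
  apply MonoidAlgebra.ofCoeff_injective
  rw [concP_eq_mul, ← one_eq_single, one_mul]

lemma concP_one_right (p : QW) : concP p (Finsupp.single [] 1) = p := by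
  apply MonoidAlgebra.ofCoeff_injective
  rw [concP_eq_mul, ← one_eq_single, mul_one]

lemma ztB_one_right (s : ℕ →₀ ℚ) : ztB s (Finsupp.single [] 1) = 0 := by
  induction s using Finsupp.induction_linear with
  | zero => simp
  | add s s' hs hs' => simp [map_add, LinearMap.add_apply, hs, hs']
  | single a r =>
      rw [single_eq_smul a r, map_smul, LinearMap.smul_apply, ztB_single,
        zetaMap_single_one]
      show r • (0 : QW) = 0
      simp

lemma ztB_cons (s w : ℕ →₀ ℚ) (q : QW) :
    ztB s (concP (emb w) q) = concP (emb (dmul s w)) q := by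
  induction s using Finsupp.induction_linear with
  | zero => simp [dmul_zero_left, emb_zero, concP_zero_left]
  | add s s' hs hs' =>
      simp [map_add, LinearMap.add_apply, hs, hs', dmul_add_left, emb_add, concP_add_left]
  | single a r =>
      rw [single_eq_smul a r, map_smul, LinearMap.smul_apply, ztB_single,
        dmul_smul_left, emb_smul, concP_smul_left]
      congr 1
      induction w using Finsupp.induction_linear with
      | zero => simp [zetaMap_eq, dmul_zero_right, emb_zero, concP_zero_left]
      | add w w' hw hw' =>
          rw [emb_add, concP_add_left, zetaMap_eq, map_add, ← zetaMap_eq, ← zetaMap_eq,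
            hw, hw', dmul_add_right, emb_add, concP_add_left]
      | single b t =>
          rw [single_eq_smul b t, emb_smul, concP_smul_left, zetaMap_eq, map_smul,
            dmul_smul_right, emb_smul, concP_smul_left, ← zetaMap_eq]
          congr 1
          induction q using Finsupp.induction_linear with
          | zero => simp [zetaMap_eq, concP_zero_right]
          | add q q' hq hq' =>
              rw [concP_add_right, zetaMap_eq, map_add, ← zetaMap_eq, ← zetaMap_eq,
                hq, hq', concP_add_right]
          | single v c =>
              rw [singleW_eq_smul v c, concP_smul_right, zetaMap_eq, map_smul,
                ← zetaMap_eq, concP_smul_right]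
              congr 1
              rw [emb_single, concP_single_single, zetaMap_single_one,
                dmul_single_single, emb_single]
              show zetaW a (b :: v) = _
              rw [zetaW, concP_single_single]
              rfl

end Bform

lemma cpow_succ (p : QW) (n : ℕ) : cpow p (n + 1) = concP p (cpow p n) := by rw [cpow]

lemma cpow_zero' (p : QW) : cpow p 0 = Finsupp.single [] 1 := by rw [cpow]

lemma sum_shift {R : Type*} [Semiring R] (E F : R) (m : ℕ) :
    ∑ i ∈ Finset.range (m+1), E^i * (F * E^(m-i)) =
      F * E^m + E * ∑ i ∈ Finset.range m, E^i * (F * E^(m-1-i)) := by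
  rw [Finset.sum_range_succ', Finset.mul_sum, add_comm]
  congr 1
  · simp
  · refine Finset.sum_congr rfl fun i hi => ?_
    have h : m - (i+1) = m - 1 - i := by omega
    rw [h, pow_succ', mul_assoc]

lemma Bform (z y : ℕ →₀ ℚ) (n : ℕ) :
    bil bsh (emb y) (cpow (emb z) n) =
      (∑ i ∈ Finset.range (n+1),
        concP (cpow (emb z) i) (concP (emb y) (cpow (emb z) (n - i))))
      - ∑ i ∈ Finset.range (n-1),
        concP (cpow (emb z) i) (concP (emb (dmul (dmul y z) z)) (cpow (emb z) (n-2-i))) := by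
  induction n with
  | zero =>
      rw [cpow_zero', bil_bsh_one_right, Finset.sum_range_one, cpow_zero',
        concP_one_left, concP_one_right]
      show emb y = emb y - ∑ i ∈ Finset.range 0, _
      rw [Finset.sum_range_zero, sub_zero]
  | succ n ih =>
      rw [cpow_succ, step, ← cpow_succ, ih]
      cases n with
      | zero =>
          rw [cpow_zero', ztB_one_right, sub_zero]
          simp only [cpow_succ, cpow_zero', Finset.sum_range_succ, Finset.sum_range_zero,
            Nat.sub_self, Nat.sub_zero, Nat.zero_sub, Nat.add_sub_cancel, zero_add,
            sub_zero, concP_one_left, concP_one_right]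
      | succ m =>
          rw [cpow_succ (emb z) m, ztB_cons]
          apply MonoidAlgebra.ofCoeff_injective
          simp only [MonoidAlgebra.ofCoeff_sub, MonoidAlgebra.ofCoeff_add,
            MonoidAlgebra.ofCoeff_sum, concP_eq_mul, cpow_eq_pow]
          rw [show m+1+1 = m+2 from rfl]
          rw [sum_shift (R := MonoidAlgebra ℚ (List ℕ)) (MonoidAlgebra.ofCoeff (emb z))
            (MonoidAlgebra.ofCoeff (emb y)) (m+2)]
          rw [show m+2-1 = m+1 from rfl, show m+1-2 = m-1 from rfl,
            show m+1-1 = m from rfl, show m+2-2 = m from rfl]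
          rw [sum_shift (R := MonoidAlgebra ℚ (List ℕ)) (MonoidAlgebra.ofCoeff (emb z))
            (MonoidAlgebra.ofCoeff (emb (dmul (dmul y z) z))) m]
          rw [mul_sub, add_sub, sub_right_comm, sub_sub]

section Phi

variable {A : Type*} [AddCommGroup A] [Module ℚ A]

lemma concP_apply_nil (p q : QW) (hp : p [] = 0) : concP p q [] = 0 := by
  rw [concP, Finsupp.sum_apply, Finsupp.sum]
  refine Finset.sum_eq_zero fun u hu => ?_
  have hu' : u ≠ [] := fun h => (h ▸ Finsupp.mem_support_iff.mp hu) hp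
  rw [Finsupp.sum_apply, Finsupp.sum]
  refine Finset.sum_eq_zero fun v hv => ?_
  rw [Finsupp.single_apply, if_neg]
  intro h
  exact hu' (List.append_eq_nil_iff.mp h).1

lemma cpow_apply_nil (w : ℕ →₀ ℚ) (n : ℕ) : cpow (emb w) (n+1) [] = 0 := by
  rw [cpow_succ]; exact concP_apply_nil _ _ (emb_apply_nil w)

lemma phi_kill (φ : QW →ₗ[ℚ] A)
    (hkill : ∀ u v : List ℕ, u ≠ [] → v ≠ [] → φ (bsh u v) = 0)
    (p q : QW) (hp : p [] = 0) (hq : q [] = 0) : φ (bil bsh p q) = 0 := by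
  rw [bil_apply, map_finsuppSum, Finsupp.sum]
  refine Finset.sum_eq_zero fun u hu => ?_
  rw [map_finsuppSum, Finsupp.sum]
  refine Finset.sum_eq_zero fun v hv => ?_
  rw [map_smul, hkill u v (fun h => (h ▸ Finsupp.mem_support_iff.mp hu) hp)
    (fun h => (h ▸ Finsupp.mem_support_iff.mp hv) hq), smul_zero]

noncomputable def Sfun (φ : QW →ₗ[ℚ] A) (z y : ℕ →₀ ℚ) (n : ℕ) : A :=
  ∑ i ∈ Finset.range (n+1),
    φ (concP (cpow (emb z) i) (concP (emb y) (cpow (emb z) (n - i))))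

lemma phi_Bform (φ : QW →ₗ[ℚ] A) (z y : ℕ →₀ ℚ) (n : ℕ) :
    φ (bil bsh (emb y) (cpow (emb z) n)) =
      Sfun φ z y n - ∑ i ∈ Finset.range (n-1),
        φ (concP (cpow (emb z) i)
          (concP (emb (dmul (dmul y z) z)) (cpow (emb z) (n-2-i)))) := by
  rw [Bform, map_sub, map_sum, map_sum, Sfun]

lemma S_one (φ : QW →ₗ[ℚ] A)
    (hkill : ∀ u v : List ℕ, u ≠ [] → v ≠ [] → φ (bsh u v) = 0)
    (z y : ℕ →₀ ℚ) : Sfun φ z y 1 = 0 := by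
  have h := phi_kill φ hkill (emb y) (cpow (emb z) 1) (emb_apply_nil y) (cpow_apply_nil z 0)
  have h2 := phi_Bform φ z y 1
  rw [h] at h2
  rw [show (1:ℕ)-1 = 0 from rfl, Finset.sum_range_zero, sub_zero] at h2
  exact h2.symm

lemma S_succ (φ : QW →ₗ[ℚ] A)
    (hkill : ∀ u v : List ℕ, u ≠ [] → v ≠ [] → φ (bsh u v) = 0)
    (z y : ℕ →₀ ℚ) (m : ℕ) :
    Sfun φ z y (m+2) = Sfun φ z (dmul (dmul y z) z) m := by
  have h := phi_kill φ hkill (emb y) (cpow (emb z) (m+2)) (emb_apply_nil y)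
    (cpow_apply_nil z (m+1))
  have h2 := phi_Bform φ z y (m+2)
  rw [h, show m+2-1 = m+1 from rfl, show m+2-2 = m from rfl] at h2
  exact (eq_of_sub_eq_zero h2.symm)

lemma S_zero (φ : QW →ₗ[ℚ] A) (z y : ℕ →₀ ℚ) : Sfun φ z y 0 = φ (emb y) := by
  rw [Sfun, Finset.sum_range_one, cpow_zero', concP_one_left, concP_one_right]

lemma S_diag (φ : QW →ₗ[ℚ] A) (z : ℕ →₀ ℚ) (n : ℕ) :
    Sfun φ z z n = ((n+1 : ℕ) : ℚ) • φ (cpow (emb z) (n+1)) := by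
  rw [Sfun]
  have key : ∀ i ∈ Finset.range (n+1),
      φ (concP (cpow (emb z) i) (concP (emb z) (cpow (emb z) (n-i)))) =
        φ (cpow (emb z) (n+1)) := by
    intro i hi
    congr 1
    rw [← cpow_succ]
    apply MonoidAlgebra.ofCoeff_injective
    rw [concP_eq_mul, cpow_eq_pow, cpow_eq_pow, cpow_eq_pow, ← pow_add]
    congr 1
    have := Finset.mem_range.mp hi
    omega
  rw [Finset.sum_congr rfl key, Finset.sum_const, Finset.card_range,
    ← Nat.cast_smul_eq_nsmul ℚ]

lemma descend (φ : QW →ₗ[ℚ] A)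
    (hkill : ∀ u v : List ℕ, u ≠ [] → v ≠ [] → φ (bsh u v) = 0)
    (z : ℕ →₀ ℚ) : ∀ k j r : ℕ,
    Sfun φ z (dpowSucc z j) (2*k+r) = Sfun φ z (dpowSucc z (j+2*k)) r := by
  intro k
  induction k with
  | zero => intro j r; rw [show 2*0+r = r by omega, show j+2*0 = j by omega]
  | succ k ihk =>
      intro j r
      rw [show 2*(k+1)+r = (2*k+r)+2 by omega, S_succ φ hkill z _ (2*k+r),
        dmul_dmul, ihk (j+2) r, show j+2+2*k = j+2*(k+1) by omega]

end Phi

theorem odd_powers_and_even_powers {A : Type*} [CommRing A] [Algebra ℚ A]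
    (φ : QW →ₗ[ℚ] A)
    (hone : φ (Finsupp.single [] 1) = 1)
    (hmul : ∀ p q : QW, φ (bshP p q) = φ p * φ q)
    (hkill : ∀ u v : List ℕ, u ≠ [] → v ≠ [] → φ (bsh u v) = 0)
    (z : ℕ →₀ ℚ) :
    (∀ k : ℕ, φ (cpow (emb z) (2 * k + 1)) =
      (1 / (2 * k + 1) : ℚ) • φ (emb (dpowSucc z (2 * k)))) ∧
    (∀ k : ℕ, 1 ≤ k → φ (cpow (emb z) (2 * k)) = 0) := by
  constructor
  · intro k
    have h1 : Sfun φ z z (2*k) = ((2*k+1 : ℕ) : ℚ) • φ (cpow (emb z) (2*k+1)) :=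
      S_diag φ z (2*k)
    have h2 : Sfun φ z z (2*k) = φ (emb (dpowSucc z (2*k))) := by
      have hd := descend φ hkill z k 0 0
      rw [show 2*k+0 = 2*k by omega, show 0+2*k = 2*k by omega,
        show dpowSucc z 0 = z from rfl, S_zero] at hd
      exact hd
    have key : ((2*k+1 : ℕ) : ℚ) • φ (cpow (emb z) (2*k+1)) = φ (emb (dpowSucc z (2*k))) :=
      h1 ▸ h2
    have hc : ((2*k+1 : ℕ) : ℚ) = 2*(k:ℚ)+1 := by push_cast; ring
    have hne : (2*(k:ℚ)+1) ≠ 0 := by positivity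
    rw [hc] at key
    rw [← key, smul_smul]
    rw [show (1 / (2*(k:ℚ)+1)) * (2*(k:ℚ)+1) = 1 by field_simp, one_smul]
  · intro k hk
    obtain ⟨j, rfl⟩ : ∃ j, k = j+1 := ⟨k-1, by omega⟩
    have h1 : Sfun φ z z (2*j+1) = ((2*j+1+1 : ℕ) : ℚ) • φ (cpow (emb z) (2*j+1+1)) :=
      S_diag φ z (2*j+1)
    have h2 : Sfun φ z z (2*j+1) = 0 := by
      have hd := descend φ hkill z j 0 1
      rw [show 0+2*j = 2*j by omega, show dpowSucc z 0 = z from rfl] at hd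
      rw [hd, S_one φ hkill z]
    rw [h2] at h1
    have hne : ((2*j+1+1 : ℕ) : ℚ) ≠ 0 := by positivity
    have := (smul_eq_zero.mp h1.symm).resolve_left hne
    rw [show 2*(j+1) = 2*j+1+1 by omega]
    exact this
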